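/- For f ∈ L¹(G×G), the term J₉ := ∬_{G×G} S_{2^n,2^n}f(x+s, y+t) ∑_{m<2^n} α_m (m+1/2)² 𝟙_{I_n}(s) 𝟙_{I_n}(t) dμ(s,t) satisfies |J₉| ≤ C · 2^{n/2} Mf(x,y), uniformly over sequences (α_m) with ∑_{m<2^n} α_m² ≤ 1. -/

import Mathlib

open MeasureTheory Finset ENNReal

noncomputable section

/-- The Walsh (dyadic) group: countable product of `ZMod 2`. -/
abbrev G := ℕ → ZMod 2

instance : MeasurableSpace (ZMod 2) := ⊤

/-- The dyadic interval `I_n` of rank `n` at `0`. -/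
def In (n : ℕ) : Set G := {y : G | ∀ i < n, y i = 0}

/-- `e_j`: the element whose `j`-th coordinate is `1`, all others `0`. -/
def ej (j : ℕ) : G := fun i => if i = j then 1 else 0

/-- The Walsh–Paley function `w_n`. -/
def walsh (n : ℕ) (x : G) : ℝ :=
  (-1 : ℝ) ^ (∑ k ∈ Finset.range n, if n.testBit k then (x k).val else 0)

/-- The Walsh–Dirichlet kernel `D_n`. -/
def Dker (n : ℕ) (x : G) : ℝ := ∑ k ∈ Finset.range n, walsh k x

/-- `μ` is the (normalized) Haar measure of `G`. -/
def IsHaar (μ : Measure G) : Prop :=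
  IsProbabilityMeasure μ ∧ ∀ a : G, MeasurePreserving (fun y => a + y) μ μ

/-- `log⁺`. -/
def logp (u : ℝ) : ℝ := if 1 < u then Real.log u else 0

/-- The `L log⁺ L` integral of a two-variable function. -/
def LlogL (μ : Measure G) (f : G × G → ℝ) : ℝ≥0∞ :=
  ∫⁻ p, ENNReal.ofReal (|f p| * logp |f p|) ∂(μ.prod μ)

/-- Walsh–Fourier coefficient of a two-variable function. -/
def fhat (μ : Measure G) (f : G × G → ℝ) (i j : ℕ) : ℝ :=
  ∫ p, f p * walsh i p.1 * walsh j p.2 ∂(μ.prod μ)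

/-- Rectangular partial sum `S_{M,N} f`. -/
def SMN (μ : Measure G) (M N : ℕ) (f : G × G → ℝ) (x y : G) : ℝ :=
  ∑ i ∈ Finset.range M, ∑ j ∈ Finset.range N, fhat μ f i j * walsh i x * walsh j y

/-- One-dimensional `2^n`-th partial sum (conditional expectation form). -/
def S2 (μ : Measure G) (n : ℕ) (f : G → ℝ) (x : G) : ℝ :=
  2 ^ n * ∫ t in In n, f (x + t) ∂μ

/-- Schipp's operator `V_n`. -/
def Vop (μ : Measure G) (n : ℕ) (f : G → ℝ) (x : G) : ℝ :=
  ((1 / 2 ^ n) * ∫ t, (∑ j ∈ Finset.range n,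
      2 ^ j / 2 * Set.indicator (In j) (fun _ => (1 : ℝ)) t * S2 μ n f (x + t + ej j)) ^ 2 ∂μ)
    ^ (1/2 : ℝ)

/-- `S^{(1)}_{2^n}`: partial sum in the first variable. -/
def S1 (μ : Measure G) (n : ℕ) (f : G × G → ℝ) (x y : G) : ℝ :=
  2 ^ n * ∫ s in In n, f (x + s, y) ∂μ

/-- `S^{(2)}_{2^n}`: partial sum in the second variable. -/
def S2' (μ : Measure G) (n : ℕ) (f : G × G → ℝ) (x y : G) : ℝ :=
  2 ^ n * ∫ t in In n, f (x, y + t) ∂μ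

/-- `V_1` of the paper (with index `n`). -/
def V1 (μ : Measure G) (n : ℕ) (f : G × G → ℝ) (x y : G) : ℝ :=
  ((1 / 2 ^ n) * ∫ t, (∑ j ∈ Finset.range n,
      2 ^ j / 2 * Set.indicator (In j) (fun _ => (1 : ℝ)) t * S1 μ n f (x + t + ej j) y) ^ 2 ∂μ)
    ^ (1/2 : ℝ)

/-- `V_2` of the paper (with index `n`). -/
def V2 (μ : Measure G) (n : ℕ) (f : G × G → ℝ) (x y : G) : ℝ :=
  ((1 / 2 ^ n) * ∫ t, (∑ j ∈ Finset.range n,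
      2 ^ j / 2 * Set.indicator (In j) (fun _ => (1 : ℝ)) t * S2' μ n f x (y + t + ej j)) ^ 2 ∂μ)
    ^ (1/2 : ℝ)

/-- Hybrid maximal function in the first variable (`ℝ≥0∞`-valued). -/
def M1e (μ : Measure G) (f : G × G → ℝ) (p : G × G) : ℝ≥0∞ :=
  ⨆ n : ℕ, ENNReal.ofReal (2 ^ n * ∫ s in In n, |f (p.1 + s, p.2)| ∂μ)

/-- Hybrid maximal function in the second variable (`ℝ≥0∞`-valued). -/
def M2e (μ : Measure G) (f : G × G → ℝ) (p : G × G) : ℝ≥0∞ :=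
  ⨆ n : ℕ, ENNReal.ofReal (2 ^ n * ∫ t in In n, |f (p.1, p.2 + t)| ∂μ)

/-- Two-dimensional dyadic maximal function (`ℝ≥0∞`-valued). -/
def Me (μ : Measure G) (f : G × G → ℝ) (p : G × G) : ℝ≥0∞ :=
  ⨆ n : ℕ, ENNReal.ofReal (2 ^ (2*n) *
    |∫ q in (In n) ×ˢ (In n), f (p.1 + q.1, p.2 + q.2) ∂(μ.prod μ)|)

/-- The diagonal maximal function `A` of the paper (`ℝ≥0∞`-valued). -/
def Ae (μ : Measure G) (f : G × G → ℝ) (p : G × G) : ℝ≥0∞ :=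
  ⨆ j : ℕ, ENNReal.ofReal (2 ^ j * ∫ s in In j, |f (p.1 + s, p.2 + s)| ∂μ)

/-- `ℝ≥0∞`-valued partial sum in the first variable. -/
def S1e (μ : Measure G) (n : ℕ) (h : G × G → ℝ≥0∞) (x y : G) : ℝ≥0∞ :=
  2 ^ n * ∫⁻ s in In n, h (x + s, y) ∂μ

/-- `ℝ≥0∞`-valued partial sum in the second variable. -/
def S2e (μ : Measure G) (n : ℕ) (h : G × G → ℝ≥0∞) (x y : G) : ℝ≥0∞ :=
  2 ^ n * ∫⁻ t in In n, h (x, y + t) ∂μ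

/-- `ℝ≥0∞`-valued maximal operator `V_1`. -/
def V1e (μ : Measure G) (h : G × G → ℝ≥0∞) (x y : G) : ℝ≥0∞ :=
  ⨆ n : ℕ, ((1 / 2 ^ n) * ∫⁻ t, (∑ j ∈ Finset.range n,
      2 ^ j / 2 * Set.indicator (In j) (fun _ => (1 : ℝ≥0∞)) t * S1e μ n h (x + t + ej j) y) ^ 2 ∂μ)
    ^ (1/2 : ℝ)

/-- `ℝ≥0∞`-valued maximal operator `V_2`. -/
def V2e (μ : Measure G) (h : G × G → ℝ≥0∞) (x y : G) : ℝ≥0∞ :=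
  ⨆ n : ℕ, ((1 / 2 ^ n) * ∫⁻ t, (∑ j ∈ Finset.range n,
      2 ^ j / 2 * Set.indicator (In j) (fun _ => (1 : ℝ≥0∞)) t * S2e μ n h x (y + t + ej j)) ^ 2 ∂μ)
    ^ (1/2 : ℝ)

/-- The strong mean `H^p_n f`. -/
def Hp (μ : Measure G) (p : ℝ) (n : ℕ) (f : G × G → ℝ) (x y : G) : ℝ :=
  ((1 / 2 ^ n) * ∑ m ∈ Finset.range (2 ^ n), |SMN μ m m f x y| ^ p) ^ (1 / p)


/-! ### Auxiliary lemmas -/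

section Aux

lemma neg_one_pow_mod_two (m : ℕ) : ((-1:ℝ))^(m % 2) = (-1)^m := by
  conv_rhs => rw [← Nat.div_add_mod m 2]
  rw [pow_add, pow_mul]
  norm_num

/-- The exponent of the Walsh function, with a flexible cut-off. -/
def wsum (i : ℕ) (x : G) (N : ℕ) : ℕ :=
  ∑ k ∈ Finset.range N, if i.testBit k then (x k).val else 0

lemma wsum_stable (i : ℕ) (x : G) {M N : ℕ} (hMN : M ≤ N) (h : i < 2 ^ M) :
    wsum i x N = wsum i x M := by
  refine (Finset.sum_subset (Finset.range_subset_range.mpr hMN) ?_).symm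
  intro k _ hk
  simp only [Finset.mem_range, not_lt] at hk
  rw [Nat.testBit_eq_false_of_lt (lt_of_lt_of_le h (Nat.pow_le_pow_right (by norm_num) hk))]
  rfl

lemma walsh_eq_wsum (i : ℕ) (x : G) {N : ℕ} (h : i < 2 ^ N) :
    walsh i x = (-1) ^ wsum i x N := by
  unfold walsh wsum
  rcases le_total i N with hc | hc
  · rw [show (∑ k ∈ Finset.range N, if i.testBit k then (x k).val else 0) = wsum i x N from rfl,
      wsum_stable i x hc (Nat.lt_two_pow_self (n := i))]
    rfl
  · rw [show (∑ k ∈ Finset.range i, if i.testBit k then (x k).val else 0) = wsum i x i from rfl,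
      wsum_stable i x hc h]
    rfl

lemma walsh_add (i : ℕ) (x y : G) {N : ℕ} (h : i < 2 ^ N) :
    walsh i (x + y) = walsh i x * walsh i y := by
  rw [walsh_eq_wsum i _ h, walsh_eq_wsum i x h, walsh_eq_wsum i y h, ← pow_add,
    ← neg_one_pow_mod_two, ← neg_one_pow_mod_two (wsum i x N + wsum i y N)]
  congr 1
  unfold wsum
  rw [← Finset.sum_add_distrib, Finset.sum_nat_mod, Finset.sum_nat_mod (Finset.range N) 2
    (fun k => (if i.testBit k then (x k).val else 0) + if i.testBit k then (y k).val else 0)]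
  congr 1
  apply Finset.sum_congr rfl
  intro k _
  by_cases hb : i.testBit k
  · simp [hb, Pi.add_apply, ZMod.val_add, Nat.mod_mod_of_dvd]
  · simp [hb]

lemma walsh_In {i n : ℕ} (h : i < 2 ^ n) {x : G} (hx : x ∈ In n) : walsh i x = 1 := by
  rw [walsh_eq_wsum i x h]
  have h0 : wsum i x n = 0 := Finset.sum_eq_zero fun k hk => by
    rw [hx k (Finset.mem_range.mp hk)]
    simp
  rw [h0, pow_zero]

lemma abs_walsh (i : ℕ) (u : G) : |walsh i u| = 1 := by
  unfold walsh
  rw [abs_pow, abs_neg, abs_one, one_pow]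

lemma In_succ_iff (n : ℕ) (u : G) : u ∈ In (n+1) ↔ u ∈ In n ∧ u n = 0 := by
  constructor
  · intro h
    exact ⟨fun i hi => h i (hi.trans (Nat.lt_succ_self n)), h n (Nat.lt_succ_self n)⟩
  · rintro ⟨h1, h2⟩ i hi
    rcases Nat.lt_succ_iff_lt_or_eq.mp hi with h | h
    exacts [h1 i h, h ▸ h2]

lemma zmod2_cases (a : ZMod 2) : a = 0 ∨ a = 1 := by
  fin_cases a <;> [exact Or.inl rfl; exact Or.inr rfl]

lemma dirichlet (n : ℕ) (u : G) :
    ∑ i ∈ Finset.range (2 ^ n), walsh i u =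
      (2:ℝ) ^ n * Set.indicator (In n) (fun _ => (1:ℝ)) u := by
  induction n with
  | zero =>
    have hu : u ∈ In 0 := fun i hi => absurd hi (Nat.not_lt_zero i)
    simp [walsh, Set.indicator_of_mem hu]
  | succ n ih =>
    have hsplit : (2:ℕ) ^ (n+1) = 2 ^ n + 2 ^ n := by ring
    rw [hsplit, Finset.sum_range_add]
    have hstep : ∀ i ∈ Finset.range (2^n),
        walsh (2^n + i) u = (-1:ℝ)^(u n).val * walsh i u := by
      intro i hi
      have hi' : i < 2^n := Finset.mem_range.mp hi
      have hlt : 2^n + i < 2^(n+1) := by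
        have : (2:ℕ)^(n+1) = 2^n + 2^n := by ring
        omega
      rw [walsh_eq_wsum _ u hlt]
      unfold wsum
      rw [Finset.sum_range_succ]
      have hbitn : (2^n + i).testBit n = true := by
        rw [Nat.testBit_two_pow_add_eq, Nat.testBit_eq_false_of_lt hi']
        rfl
      have hsum : (∑ k ∈ Finset.range n, if (2^n + i).testBit k then (u k).val else 0)
          = wsum i u n := by
        unfold wsum
        apply Finset.sum_congr rfl
        intro k hk
        rw [Nat.testBit_two_pow_add_gt (Finset.mem_range.mp hk)]
      rw [hbitn, hsum, if_pos rfl, pow_add, walsh_eq_wsum i u hi', mul_comm]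
    rw [Finset.sum_congr rfl hstep, ← Finset.mul_sum, ih]
    by_cases hIn : u ∈ In n
    · rcases zmod2_cases (u n) with h0 | h1
      · have hmem : u ∈ In (n+1) := (In_succ_iff n u).mpr ⟨hIn, h0⟩
        rw [Set.indicator_of_mem hIn, Set.indicator_of_mem hmem, h0]
        simp [pow_succ]
        ring
      · have hmem : u ∉ In (n+1) := fun h => by
          have := ((In_succ_iff n u).mp h).2
          rw [h1] at this
          exact one_ne_zero this
        rw [Set.indicator_of_notMem hmem, h1]
        simp [ZMod.val_one]
    · have hmem : u ∉ In (n+1) := fun h => hIn ((In_succ_iff n u).mp h).1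
      rw [Set.indicator_of_notMem hmem, Set.indicator_of_notMem hIn]
      ring

end Aux


section Aux2

lemma measurable_walsh (i : ℕ) : Measurable (walsh i) := by
  unfold walsh
  have he : Measurable (fun x : G => ∑ k ∈ Finset.range i,
      if i.testBit k then (x k).val else 0) := by
    apply Finset.measurable_sum
    intro k _
    exact (measurable_from_top (f := fun a : ZMod 2 => if i.testBit k then a.val else 0)).comp
      (measurable_pi_apply k)
  exact (measurable_from_top (f := fun m : ℕ => ((-1:ℝ))^m)).comp he

lemma measurableSet_In (n : ℕ) : MeasurableSet (In n) := by
  have heq : In n = ⋂ i ∈ Finset.range n, {y : G | y i = 0} := by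
    ext y
    simp [In]
  rw [heq]
  refine (Finset.range n).measurableSet_biInter fun i _ => ?_
  have h : {y : G | y i = 0} = (fun y : G => y i) ⁻¹' {0} := rfl
  rw [h]
  exact (measurable_pi_apply i) (by trivial)

lemma measurable_add_left (a : G) : Measurable (fun y : G => a + y) := by
  apply measurable_pi_lambda
  intro i
  exact (measurable_from_top (f := fun b : ZMod 2 => a i + b)).comp (measurable_pi_apply i)

lemma G_add_self (a : G) : a + a = 0 := by
  funext i
  have : ∀ b : ZMod 2, b + b = 0 := by decide
  exact this (a i)

lemma measure_In {μ : Measure G} (hμ : IsHaar μ) (n : ℕ) :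
    μ (In n) = ((2:ℝ≥0∞) ^ n)⁻¹ := by
  haveI := hμ.1
  induction n with
  | zero =>
    have : In 0 = Set.univ := by
      ext y
      simp [In]
    simp [this]
  | succ n ih =>
    have hA : MeasurableSet (In (n+1)) := measurableSet_In (n+1)
    have hB : MeasurableSet ((fun y : G => ej n + y) ⁻¹' In (n+1)) :=
      (measurable_add_left (ej n)) hA
    have hsplit : In n = In (n+1) ∪ (fun y : G => ej n + y) ⁻¹' In (n+1) := by
      ext u
      constructor
      · intro hu
        rcases zmod2_cases (u n) with h0 | h1
        · exact Or.inl ((In_succ_iff n u).mpr ⟨hu, h0⟩)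
        · refine Or.inr ((In_succ_iff n (ej n + u)).mpr ⟨fun i hi => ?_, ?_⟩)
          · have : ej n i = 0 := by
              unfold ej
              rw [if_neg (by omega)]
            simp [Pi.add_apply, this, hu i hi]
          · have h2 : ej n n = 1 := by
              unfold ej
              rw [if_pos rfl]
            rw [Pi.add_apply, h2, h1]
            decide
      · rintro (hu | hu)
        · exact fun i hi => hu i (hi.trans (Nat.lt_succ_self n))
        · intro i hi
          have h1 : (ej n + u) i = 0 := hu i (hi.trans (Nat.lt_succ_self n))
          have h2 : ej n i = 0 := by
            unfold ej
            rw [if_neg (by omega)]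
          simpa [Pi.add_apply, h2] using h1
    have hdisj : Disjoint (In (n+1)) ((fun y : G => ej n + y) ⁻¹' In (n+1)) := by
      rw [Set.disjoint_left]
      intro u hu1 hu2
      have e1 : u n = 0 := ((In_succ_iff n u).mp hu1).2
      have e2 : (ej n + u) n = 0 := ((In_succ_iff n (ej n + u)).mp hu2).2
      have h2 : ej n n = 1 := by
        unfold ej
        rw [if_pos rfl]
      rw [Pi.add_apply, h2, e1, add_zero] at e2
      exact one_ne_zero e2
    have hBm : μ ((fun y : G => ej n + y) ⁻¹' In (n+1)) = μ (In (n+1)) :=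
      (hμ.2 (ej n)).measure_preimage hA.nullMeasurableSet
    have hsum : μ (In n) = μ (In (n+1)) + μ (In (n+1)) := by
      rw [hsplit, measure_union hdisj hB, hBm]
    rw [ih] at hsum
    have h2 : (2:ℝ≥0∞) * μ (In (n+1)) = 2 * ((2:ℝ≥0∞) ^ (n+1))⁻¹ := by
      rw [two_mul, ← hsum, pow_succ,
        ENNReal.mul_inv (Or.inl (by positivity)) (Or.inl (ENNReal.pow_ne_top (by norm_num)))]
      rw [← mul_assoc, mul_comm (2:ℝ≥0∞) ((2:ℝ≥0∞)^n)⁻¹, mul_assoc,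
        ENNReal.mul_inv_cancel (by norm_num) (by norm_num), mul_one]
    exact (ENNReal.mul_right_inj (by norm_num) (by norm_num)).mp h2

end Aux2


section Aux3

lemma add_mem_In_iff {n : ℕ} {a q : G} (hq : q ∈ In n) : a + q ∈ In n ↔ a ∈ In n := by
  constructor <;> intro h i hi
  · have h1 := h i hi
    rw [Pi.add_apply, hq i hi, add_zero] at h1
    exact h1
  · rw [Pi.add_apply, hq i hi, add_zero]
    exact h i hi

lemma SMN_formula {μ : Measure G} (hμ : IsHaar μ) {f : G × G → ℝ}
    (hf : Integrable f (μ.prod μ)) (n : ℕ) (x y : G) :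
    SMN μ (2^n) (2^n) f x y =
      ∫ p, f p * ((2:ℝ)^n * Set.indicator (In n) (fun _ => (1:ℝ)) (p.1 + x))
            * ((2:ℝ)^n * Set.indicator (In n) (fun _ => (1:ℝ)) (p.2 + y)) ∂(μ.prod μ) := by
  haveI := hμ.1
  have hint : ∀ i j : ℕ, Integrable
      (fun p : G × G => f p * (walsh i p.1 * walsh i x) * (walsh j p.2 * walsh j y))
      (μ.prod μ) := by
    intro i j
    have hb : Integrable
        (fun p : G × G => ((walsh i p.1 * walsh i x) * (walsh j p.2 * walsh j y)) * f p)
        (μ.prod μ) := by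
      apply hf.bdd_mul (c := |walsh i x| * |walsh j y|)
      · exact ((((measurable_walsh i).comp measurable_fst).mul_const _).mul
          (((measurable_walsh j).comp measurable_snd).mul_const _)).aestronglyMeasurable
      · refine Filter.Eventually.of_forall fun p => ?_
        rw [Real.norm_eq_abs, abs_mul, abs_mul, abs_mul, abs_walsh i p.1, abs_walsh j p.2,
          one_mul, one_mul]
    exact hb.congr (Filter.Eventually.of_forall fun p => by ring)
  have step1 : ∀ i j : ℕ, fhat μ f i j * walsh i x * walsh j y =
      ∫ p, f p * (walsh i p.1 * walsh i x) * (walsh j p.2 * walsh j y) ∂(μ.prod μ) := by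
    intro i j
    unfold fhat
    rw [← integral_mul_const, ← integral_mul_const]
    exact integral_congr_ae (Filter.Eventually.of_forall fun p => by ring)
  calc SMN μ (2^n) (2^n) f x y
      = ∑ i ∈ Finset.range (2^n), ∑ j ∈ Finset.range (2^n),
          ∫ p, f p * (walsh i p.1 * walsh i x) * (walsh j p.2 * walsh j y) ∂(μ.prod μ) :=
        Finset.sum_congr rfl fun i _ => Finset.sum_congr rfl fun j _ => step1 i j
    _ = ∑ i ∈ Finset.range (2^n), ∫ p, ∑ j ∈ Finset.range (2^n),
          f p * (walsh i p.1 * walsh i x) * (walsh j p.2 * walsh j y) ∂(μ.prod μ) :=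
        Finset.sum_congr rfl fun i _ => (integral_finset_sum _ fun j _ => hint i j).symm
    _ = ∫ p, ∑ i ∈ Finset.range (2^n), ∑ j ∈ Finset.range (2^n),
          f p * (walsh i p.1 * walsh i x) * (walsh j p.2 * walsh j y) ∂(μ.prod μ) :=
        (integral_finset_sum _ fun i _ => integrable_finset_sum _ fun j _ => hint i j).symm
    _ = _ := by
        refine integral_congr_ae (Filter.Eventually.of_forall fun p => ?_)
        have h1 : ∀ i ∈ Finset.range (2^n), ∀ j ∈ Finset.range (2^n),
            f p * (walsh i p.1 * walsh i x) * (walsh j p.2 * walsh j y)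
              = (f p * walsh i (p.1 + x)) * walsh j (p.2 + y) := by
          intro i hi j hj
          rw [walsh_add i p.1 x (Finset.mem_range.mp hi),
            walsh_add j p.2 y (Finset.mem_range.mp hj)]
        calc ∑ i ∈ Finset.range (2^n), ∑ j ∈ Finset.range (2^n),
              f p * (walsh i p.1 * walsh i x) * (walsh j p.2 * walsh j y)
            = ∑ i ∈ Finset.range (2^n), ∑ j ∈ Finset.range (2^n),
              (f p * walsh i (p.1 + x)) * walsh j (p.2 + y) :=
              Finset.sum_congr rfl fun i hi => Finset.sum_congr rfl fun j hj => h1 i hi j hj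
          _ = f p * ((∑ i ∈ Finset.range (2^n), walsh i (p.1 + x)) *
              (∑ j ∈ Finset.range (2^n), walsh j (p.2 + y))) := by
              rw [Finset.sum_mul_sum, Finset.mul_sum]
              refine Finset.sum_congr rfl fun i _ => ?_
              rw [Finset.mul_sum]
              exact Finset.sum_congr rfl fun j _ => by ring
          _ = _ := by rw [dirichlet, dirichlet]; ring

lemma indicator_In_add {n : ℕ} {a q : G} (hq : q ∈ In n) :
    Set.indicator (In n) (fun _ => (1:ℝ)) (a + q) = Set.indicator (In n) (fun _ => (1:ℝ)) a := by
  by_cases h : a ∈ In n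
  · rw [Set.indicator_of_mem ((add_mem_In_iff hq).mpr h), Set.indicator_of_mem h]
  · rw [Set.indicator_of_notMem (fun hc => h ((add_mem_In_iff hq).mp hc)),
      Set.indicator_of_notMem h]

lemma SMN_coset {μ : Measure G} (hμ : IsHaar μ) {f : G × G → ℝ}
    (hf : Integrable f (μ.prod μ)) (n : ℕ) (x y : G) {q1 q2 : G}
    (hq1 : q1 ∈ In n) (hq2 : q2 ∈ In n) :
    SMN μ (2^n) (2^n) f (x + q1) (y + q2) = SMN μ (2^n) (2^n) f x y := by
  rw [SMN_formula hμ hf, SMN_formula hμ hf]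
  refine integral_congr_ae (Filter.Eventually.of_forall fun p => ?_)
  dsimp only
  have e1 : p.1 + (x + q1) = (p.1 + x) + q1 := by rw [add_assoc]
  have e2 : p.2 + (y + q2) = (p.2 + y) + q2 := by rw [add_assoc]
  rw [e1, e2, indicator_In_add hq1, indicator_In_add hq2]

end Aux3


section Aux4

lemma measurable_add_right (a : G) : Measurable (fun y : G => y + a) := by
  apply measurable_pi_lambda
  intro i
  exact (measurable_from_top (f := fun b : ZMod 2 => b + a i)).comp (measurable_pi_apply i)

lemma add_add_self (a b : G) : a + b + a = b := by
  rw [add_comm a b, add_assoc, G_add_self, add_zero]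

lemma SMN_eq_avg {μ : Measure G} (hμ : IsHaar μ) {f : G × G → ℝ}
    (hf : Integrable f (μ.prod μ)) (n : ℕ) (x y : G) :
    SMN μ (2^n) (2^n) f x y =
      ((2:ℝ)^n * (2:ℝ)^n) * ∫ q in (In n) ×ˢ (In n), f (x + q.1, y + q.2) ∂(μ.prod μ) := by
  haveI := hμ.1
  rw [SMN_formula hμ hf]
  have hT : MeasurePreserving (fun q : G × G => (x + q.1, y + q.2)) (μ.prod μ) (μ.prod μ) :=
    (hμ.2 x).prod (hμ.2 y)
  have hm1 : Measurable fun p : G × G =>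
      Set.indicator (In n) (fun _ => (1:ℝ)) (p.1 + x) :=
    (measurable_const.indicator (measurableSet_In n)).comp
      ((measurable_add_right x).comp measurable_fst)
  have hm2 : Measurable fun p : G × G =>
      Set.indicator (In n) (fun _ => (1:ℝ)) (p.2 + y) :=
    (measurable_const.indicator (measurableSet_In n)).comp
      ((measurable_add_right y).comp measurable_snd)
  have hg : AEStronglyMeasurable (fun p : G × G =>
      f p * Set.indicator (In n) (fun _ => (1:ℝ)) (p.1 + x)
          * Set.indicator (In n) (fun _ => (1:ℝ)) (p.2 + y)) (μ.prod μ) :=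
    (hf.aestronglyMeasurable.mul hm1.aestronglyMeasurable).mul hm2.aestronglyMeasurable
  have stepA : ∫ p, f p * ((2:ℝ)^n * Set.indicator (In n) (fun _ => (1:ℝ)) (p.1 + x))
            * ((2:ℝ)^n * Set.indicator (In n) (fun _ => (1:ℝ)) (p.2 + y)) ∂(μ.prod μ)
      = ((2:ℝ)^n * (2:ℝ)^n) * ∫ p, f p * Set.indicator (In n) (fun _ => (1:ℝ)) (p.1 + x)
            * Set.indicator (In n) (fun _ => (1:ℝ)) (p.2 + y) ∂(μ.prod μ) := by
    rw [← integral_const_mul]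
    exact integral_congr_ae (Filter.Eventually.of_forall fun p => by ring)
  rw [stepA]
  congr 1
  have stepB := MeasureTheory.integral_map (φ := fun q : G × G => (x + q.1, y + q.2))
    (f := fun p : G × G => f p * Set.indicator (In n) (fun _ => (1:ℝ)) (p.1 + x)
          * Set.indicator (In n) (fun _ => (1:ℝ)) (p.2 + y))
    hT.measurable.aemeasurable (by rw [hT.map_eq]; exact hg)
  rw [hT.map_eq] at stepB
  refine stepB.trans ?_
  rw [← integral_indicator ((measurableSet_In n).prod (measurableSet_In n))]
  refine integral_congr_ae (Filter.Eventually.of_forall fun q => ?_)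
  dsimp only
  rw [add_add_self x q.1, add_add_self y q.2]
  by_cases h1 : q.1 ∈ In n
  · by_cases h2 : q.2 ∈ In n
    · rw [Set.indicator_of_mem h1, Set.indicator_of_mem h2,
        Set.indicator_of_mem (Set.mem_prod.mpr ⟨h1, h2⟩), mul_one, mul_one]
    · rw [Set.indicator_of_notMem h2,
        Set.indicator_of_notMem (fun hc => h2 (Set.mem_prod.mp hc).2), mul_zero]
  · rw [Set.indicator_of_notMem h1,
      Set.indicator_of_notMem (fun hc => h1 (Set.mem_prod.mp hc).1), mul_zero, zero_mul]

lemma key {μ : Measure G} (hμ : IsHaar μ) {f : G × G → ℝ}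
    (hf : Integrable f (μ.prod μ)) (n : ℕ) (x y : G) (c : ℝ) :
    ∫ q : G × G, SMN μ (2^n) (2^n) f (x + q.1) (y + q.2) * c *
        Set.indicator (In n) (fun _ => (1:ℝ)) q.1 *
        Set.indicator (In n) (fun _ => (1:ℝ)) q.2 ∂(μ.prod μ)
      = c * ∫ q in (In n) ×ˢ (In n), f (x + q.1, y + q.2) ∂(μ.prod μ) := by
  haveI := hμ.1
  have hpt : ∀ q : G × G, SMN μ (2^n) (2^n) f (x + q.1) (y + q.2) * c *
        Set.indicator (In n) (fun _ => (1:ℝ)) q.1 *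
        Set.indicator (In n) (fun _ => (1:ℝ)) q.2
      = (SMN μ (2^n) (2^n) f x y * c) *
        (Set.indicator (In n) (fun _ => (1:ℝ)) q.1 *
          Set.indicator (In n) (fun _ => (1:ℝ)) q.2) := by
    intro q
    by_cases h1 : q.1 ∈ In n
    · by_cases h2 : q.2 ∈ In n
      · rw [SMN_coset hμ hf n x y h1 h2]
        ring
      · rw [Set.indicator_of_notMem h2]
        ring
    · rw [Set.indicator_of_notMem h1]
      ring
  rw [integral_congr_ae (Filter.Eventually.of_forall hpt), integral_const_mul]
  have hmeas : ∫ q : G × G, Set.indicator (In n) (fun _ => (1:ℝ)) q.1 *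
      Set.indicator (In n) (fun _ => (1:ℝ)) q.2 ∂(μ.prod μ)
      = ((2:ℝ)^n)⁻¹ * ((2:ℝ)^n)⁻¹ := by
    have hpt2 : ∀ q : G × G, Set.indicator (In n) (fun _ => (1:ℝ)) q.1 *
        Set.indicator (In n) (fun _ => (1:ℝ)) q.2 =
        Set.indicator ((In n) ×ˢ (In n)) (fun _ => (1:ℝ)) q := by
      intro q
      by_cases h1 : q.1 ∈ In n <;> by_cases h2 : q.2 ∈ In n <;>
        simp [Set.indicator_apply, Set.mem_prod, h1, h2]
    rw [integral_congr_ae (Filter.Eventually.of_forall hpt2),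
      integral_indicator ((measurableSet_In n).prod (measurableSet_In n)),
      setIntegral_const, Measure.real_def, Measure.prod_prod, measure_In hμ, smul_eq_mul, mul_one]
    simp [ENNReal.toReal_mul, ENNReal.toReal_inv, ENNReal.toReal_pow]
  rw [hmeas, SMN_eq_avg hμ hf n x y]
  have h2n : (2:ℝ)^n ≠ 0 := by positivity
  field_simp

end Aux4

/-- the estimate `|J₉| ≲ 2^{n/2} Mf(x,y)`. -/
theorem J9_estimate :
    ∃ C : ℝ, 0 < C ∧ ∀ (μ : Measure G), IsHaar μ →
      ∀ f : G × G → ℝ, Integrable f (μ.prod μ) →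
      ∀ (n : ℕ) (α : ℕ → ℝ), (∑ m ∈ Finset.range (2 ^ n), (α m) ^ 2) ≤ 1 →
      ∀ x y : G,
        ENNReal.ofReal
          |∫ q, SMN μ (2 ^ n) (2 ^ n) f (x + q.1) (y + q.2) *
              (∑ m ∈ Finset.range (2 ^ n), α m * ((m : ℝ) + 1/2) ^ 2) *
              Set.indicator (In n) (fun _ => (1 : ℝ)) q.1 *
              Set.indicator (In n) (fun _ => (1 : ℝ)) q.2 ∂(μ.prod μ)| ≤
          ENNReal.ofReal (C * (2 : ℝ) ^ ((n : ℝ) / 2)) * Me μ f (x, y) := by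
  refine ⟨1, one_pos, ?_⟩
  intro μ hμ f hf n α hα x y
  haveI := hμ.1
  set c : ℝ := ∑ m ∈ Finset.range (2 ^ n), α m * ((m : ℝ) + 1/2) ^ 2 with hc
  set r : ℝ := ∫ q in (In n) ×ˢ (In n), f (x + q.1, y + q.2) ∂(μ.prod μ) with hr
  have hkey := key hμ hf n x y c
  rw [hkey]
  -- bound on |c|
  have hcb : |c| ≤ (2:ℝ) ^ ((n:ℝ)/2) * 2 ^ (2*n) := by
    have hcs := Finset.sum_mul_sq_le_sq_mul_sq (Finset.range (2^n)) α
      (fun m => ((m:ℝ) + 1/2) ^ 2)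
    have hbound : ∑ m ∈ Finset.range (2^n), (((m:ℝ) + 1/2) ^ 2) ^ 2
        ≤ (2:ℝ)^n * ((2:ℝ)^n)^4 := by
      calc ∑ m ∈ Finset.range (2^n), (((m:ℝ) + 1/2) ^ 2) ^ 2
          ≤ ∑ _m ∈ Finset.range (2^n), ((2:ℝ)^n)^4 := by
            apply Finset.sum_le_sum
            intro m hm
            have hmlt : (m:ℕ) < 2^n := Finset.mem_range.mp hm
            have h1 : ((m:ℝ)) + 1 ≤ ((2:ℕ)^n : ℝ) := by
              exact_mod_cast Nat.succ_le_of_lt hmlt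
            push_cast at h1
            have hm' : (m:ℝ) + 1/2 ≤ (2:ℝ)^n := by linarith
            have h0 : (0:ℝ) ≤ (m:ℝ) + 1/2 := by positivity
            calc (((m:ℝ) + 1/2) ^ 2) ^ 2 = ((m:ℝ) + 1/2) ^ 4 := by ring
              _ ≤ ((2:ℝ)^n)^4 := pow_le_pow_left₀ h0 hm' 4
        _ = (2:ℝ)^n * ((2:ℝ)^n)^4 := by
            rw [Finset.sum_const, Finset.card_range, nsmul_eq_mul]
            push_cast
            ring
    have hc2 : c ^ 2 ≤ (2:ℝ)^(5*n) := by
      have hnn : (0:ℝ) ≤ ∑ m ∈ Finset.range (2^n), (((m:ℝ) + 1/2) ^ 2) ^ 2 :=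
        Finset.sum_nonneg fun m _ => by positivity
      calc c ^ 2 ≤ (∑ m ∈ Finset.range (2^n), (α m) ^ 2) *
            (∑ m ∈ Finset.range (2^n), (((m:ℝ) + 1/2) ^ 2) ^ 2) := hcs
        _ ≤ 1 * ((2:ℝ)^n * ((2:ℝ)^n)^4) := mul_le_mul hα hbound hnn zero_le_one
        _ = (2:ℝ)^(5*n) := by rw [one_mul, ← pow_mul, ← pow_add]; ring_nf
    have hb2 : ((2:ℝ) ^ ((n:ℝ)/2) * 2 ^ (2*n)) ^ 2 = (2:ℝ)^(5*n) := by
      rw [mul_pow, ← Real.rpow_natCast ((2:ℝ) ^ ((n:ℝ)/2)) 2,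
        ← Real.rpow_mul (by norm_num : (0:ℝ) ≤ 2)]
      have he : (n:ℝ)/2 * (2:ℕ) = (n:ℕ) := by push_cast; ring
      rw [he, Real.rpow_natCast, ← pow_mul, ← pow_add]
      congr 1
      ring
    calc |c| = Real.sqrt (c ^ 2) := (Real.sqrt_sq_eq_abs c).symm
      _ ≤ Real.sqrt ((2:ℝ)^(5*n)) := Real.sqrt_le_sqrt hc2
      _ = (2:ℝ) ^ ((n:ℝ)/2) * 2 ^ (2*n) := by
          rw [← hb2, Real.sqrt_sq (by positivity)]
  have habs : |c * r| ≤ (2:ℝ) ^ ((n:ℝ)/2) * (2 ^ (2*n) * |r|) := by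
    rw [abs_mul]
    calc |c| * |r| ≤ ((2:ℝ) ^ ((n:ℝ)/2) * 2 ^ (2*n)) * |r| :=
          mul_le_mul_of_nonneg_right hcb (abs_nonneg r)
      _ = _ := by ring
  have hMe : ENNReal.ofReal ((2:ℝ) ^ (2*n) * |r|) ≤ Me μ f (x, y) := by
    unfold Me
    exact le_iSup (fun j : ℕ => ENNReal.ofReal ((2:ℝ) ^ (2*j) *
      |∫ q in (In j) ×ˢ (In j), f (x + q.1, y + q.2) ∂(μ.prod μ)|)) n
  calc ENNReal.ofReal |c * r|
      ≤ ENNReal.ofReal ((2:ℝ) ^ ((n:ℝ)/2) * (2 ^ (2*n) * |r|)) :=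
        ENNReal.ofReal_le_ofReal habs
    _ = ENNReal.ofReal ((2:ℝ) ^ ((n:ℝ)/2)) * ENNReal.ofReal ((2:ℝ) ^ (2*n) * |r|) :=
        ENNReal.ofReal_mul (by positivity)
    _ ≤ ENNReal.ofReal (1 * (2:ℝ) ^ ((n:ℝ)/2)) * Me μ f (x, y) := by
        rw [one_mul]
        exact mul_le_mul' le_rfl hMe
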